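/- Let A be a real n×n matrix having 1 as an eigenvalue. Then A is similar over ℝ to a matrix all of whose row sums and column sums equal 1 if and only if there exist vectors v, w ∈ ℝⁿ with A·v = v, Aᵀ·w = w, and ⟨v, w⟩ ≠ 0 (i.e., the space of left eigenvectors of A corresponding to 1 is not orthogonal to the space of right eigenvectors of A corresponding to 1). -/

import Mathlib

open Matrix

noncomputable def dotL {k : ℕ} (w : Fin k → ℝ) : (Fin k → ℝ) →ₗ[ℝ] ℝ where
  toFun x := w ⬝ᵥ x
  map_add' a b := dotProduct_add w a b
  map_smul' c x := by simp [dotProduct_smul]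

lemma exQ (m : ℕ) (v w : Fin (m+1) → ℝ) (hc : v ⬝ᵥ w ≠ 0) :
    ∃ Q : Matrix (Fin (m+1)) (Fin (m+1)) ℝ, IsUnit Q.det ∧
      Q *ᵥ (Pi.single 0 1 : Fin (m+1) → ℝ) = v ∧ Qᵀ *ᵥ w = (v ⬝ᵥ w) • (Pi.single 0 1 : Fin (m+1) → ℝ) := by
  have hwv : w ⬝ᵥ v ≠ 0 := by rwa [dotProduct_comm]
  -- kernel of the functional x ↦ w ⬝ᵥ x
  set K := LinearMap.ker (dotL w) with hK
  have hrange : LinearMap.range (dotL w) = ⊤ := by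
    rw [LinearMap.range_eq_top]
    intro r
    exact ⟨(r / (w ⬝ᵥ v)) • v, by simp [dotL, dotProduct_smul]; field_simp⟩
  have hker : Module.finrank ℝ K = m := by
    have h := LinearMap.finrank_range_add_finrank_ker (dotL w)
    rw [← hK, hrange, finrank_top, Module.finrank_self, Module.finrank_pi, Fintype.card_fin] at h
    omega
  let bW : Module.Basis (Fin m) ℝ K := Module.finBasisOfFinrankEq ℝ K hker
  have hli : ∀ (c : ℝ), ∀ x ∈ K, c • v + x = 0 → c = 0 := by
    intro c x hx h0
    have : w ⬝ᵥ (c • v + x) = 0 := by rw [h0]; simp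
    rw [dotProduct_add, dotProduct_smul] at this
    have hx0 : w ⬝ᵥ x = 0 := hx
    rw [hx0, add_zero, smul_eq_mul] at this
    exact (mul_eq_zero.mp this).resolve_right hwv
  have hsp : ∀ z : Fin (m+1) → ℝ, ∃ c : ℝ, z + c • v ∈ K := by
    intro z
    refine ⟨-(w ⬝ᵥ z) / (w ⬝ᵥ v), ?_⟩
    show w ⬝ᵥ (z + _) = 0
    rw [dotProduct_add, dotProduct_smul, smul_eq_mul]
    field_simp
    ring
  let b : Module.Basis (Fin (m+1)) ℝ (Fin (m+1) → ℝ) := Module.Basis.mkFinCons v bW hli hsp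
  have hb0 : b 0 = v := by simp [b, Module.Basis.coe_mkFinCons]
  have hbs : ∀ i : Fin m, w ⬝ᵥ (b i.succ) = 0 := by
    intro i
    have : b i.succ = (bW i : Fin (m+1) → ℝ) := by simp [b, Module.Basis.coe_mkFinCons]
    rw [this]
    exact (bW i).2
  let e := Pi.basisFun ℝ (Fin (m+1))
  refine ⟨e.toMatrix ⇑b, ?_, ?_, ?_⟩
  · rw [← Module.Basis.det_apply]; exact e.isUnit_det b
  · ext i
    rw [mulVec_single]
    simp [Module.Basis.toMatrix_apply, e, hb0]
  · ext j
    have : (e.toMatrix ⇑b)ᵀ *ᵥ w = fun j => (b j) ⬝ᵥ w := by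
      ext j
      simp [mulVec, dotProduct, transpose_apply, Module.Basis.toMatrix_apply, e]
    rw [this]
    refine Fin.cases ?_ (fun i => ?_) j
    · simp [hb0]
    · have h0 : b i.succ ⬝ᵥ w = 0 := by rw [dotProduct_comm]; exact hbs i
      simp [h0, Pi.single_apply, Fin.succ_ne_zero]

lemma invVec {k : ℕ} (M : Matrix (Fin k) (Fin k) ℝ) (h : IsUnit M.det)
    (x : Fin k → ℝ) : M⁻¹ *ᵥ (M *ᵥ x) = x := by
  rw [mulVec_mulVec, nonsing_inv_mul _ h, one_mulVec]

lemma invVec' {k : ℕ} (M : Matrix (Fin k) (Fin k) ℝ) (h : IsUnit M.det)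
    (x : Fin k → ℝ) : M *ᵥ (M⁻¹ *ᵥ x) = x := by
  rw [mulVec_mulVec, mul_nonsing_inv _ h, one_mulVec]

lemma dotT {k : ℕ} (M : Matrix (Fin k) (Fin k) ℝ) (x y : Fin k → ℝ) :
    (M *ᵥ x) ⬝ᵥ y = x ⬝ᵥ (Mᵀ *ᵥ y) := by
  rw [dotProduct_mulVec, vecMul_transpose]

/-- Let `A` be a real `n × n` matrix having `1` as an eigenvalue.  Then `A` is similar
over `ℝ` to a matrix all of whose row sums and column sums equal `1` if and only if
there are vectors `v, w` with `A·v = v`, `Aᵀ·w = w` and `⟨v, w⟩ ≠ 0` (i.e. the space of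
left eigenvectors of `A` for `1` is not orthogonal to the space of right eigenvectors
of `A` for `1`). -/
theorem stmt13 (n : ℕ) (A : Matrix (Fin n) (Fin n) ℝ)
    (h1 : ∃ v : Fin n → ℝ, v ≠ 0 ∧ A.mulVec v = v) :
    (∃ P : Matrix (Fin n) (Fin n) ℝ, IsUnit P.det ∧
      (∀ i, ∑ j, (P⁻¹ * A * P) i j = 1) ∧ (∀ j, ∑ i, (P⁻¹ * A * P) i j = 1)) ↔
    (∃ v w : Fin n → ℝ, A.mulVec v = v ∧ Aᵀ.mulVec w = w ∧ v ⬝ᵥ w ≠ 0) := by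
  obtain ⟨v₀, hv₀, -⟩ := h1
  obtain ⟨m, rfl⟩ : ∃ m, n = m + 1 := by
    rcases n with _ | m
    · exact absurd (funext fun i => i.elim0) hv₀
    · exact ⟨m, rfl⟩
  clear hv₀ v₀
  set ones : Fin (m+1) → ℝ := fun _ => 1 with hones
  have hdot11 : ones ⬝ᵥ ones = (m+1 : ℝ) := by
    simp [ones, dotProduct]
  have hone_ne : ones ⬝ᵥ ones ≠ 0 := by
    rw [hdot11]; positivity
  have hrow_iff : ∀ B : Matrix (Fin (m+1)) (Fin (m+1)) ℝ,
      (∀ i, ∑ j, B i j = 1) ↔ B *ᵥ ones = ones := by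
    intro B
    constructor
    · intro h; ext i; simpa [mulVec, dotProduct, ones] using h i
    · intro h i
      have := congrFun h i
      simpa [mulVec, dotProduct, ones] using this
  have hcol_iff : ∀ B : Matrix (Fin (m+1)) (Fin (m+1)) ℝ,
      (∀ j, ∑ i, B i j = 1) ↔ Bᵀ *ᵥ ones = ones := by
    intro B
    constructor
    · intro h; ext j; simpa [mulVec, dotProduct, ones, transpose_apply] using h j
    · intro h j
      have := congrFun h j
      simpa [mulVec, dotProduct, ones, transpose_apply] using this
  constructor
  · rintro ⟨P, hP, hrow, hcol⟩
    have hPT : IsUnit Pᵀ.det := by rwa [det_transpose]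
    rw [hrow_iff] at hrow
    rw [hcol_iff] at hcol
    refine ⟨P *ᵥ ones, Pᵀ⁻¹ *ᵥ ones, ?_, ?_, ?_⟩
    · -- A *ᵥ (P *ᵥ ones) = P *ᵥ ones
      have : (P⁻¹ * A * P) *ᵥ ones = ones := hrow
      have h2 := congrArg (fun x => P *ᵥ x) this
      rw [← mulVec_mulVec, ← mulVec_mulVec, invVec' P hP] at h2
      exact h2
    · -- Aᵀ *ᵥ (Pᵀ⁻¹ *ᵥ ones) = Pᵀ⁻¹ *ᵥ ones
      have ht : (P⁻¹ * A * P)ᵀ = Pᵀ * (Aᵀ * P⁻¹ᵀ) := by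
        rw [transpose_mul, transpose_mul]
      rw [ht] at hcol
      rw [← mulVec_mulVec, ← mulVec_mulVec] at hcol
      have h2 := congrArg (fun x => Pᵀ⁻¹ *ᵥ x) hcol
      rw [invVec Pᵀ hPT] at h2
      rw [transpose_nonsing_inv] at h2
      exact h2
    · -- dot product
      have key : Pᵀ *ᵥ (Pᵀ⁻¹ *ᵥ ones) = ones := invVec' Pᵀ hPT ones
      rw [dotT, key, hdot11]
      positivity
  · rintro ⟨v, w, hv, hw, hc⟩
    obtain ⟨Q1, hQ1, hQ1e, hQ1w⟩ := exQ m v w hc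
    obtain ⟨Q2, hQ2, hQ2e, hQ2w⟩ := exQ m ones ones hone_ne
    set c := v ⬝ᵥ w with hcc
    set a : ℝ := (m+1 : ℝ) / c with ha
    have ha0 : a ≠ 0 := by
      apply div_ne_zero _ hc
      positivity
    set d : Fin (m+1) → ℝ := fun j => if j = 0 then a else 1 with hd
    set D : Matrix (Fin (m+1)) (Fin (m+1)) ℝ := diagonal d with hD
    have hDdet : IsUnit D.det := by
      rw [hD, det_diagonal, isUnit_iff_ne_zero]
      apply Finset.prod_ne_zero_iff.mpr
      intro j _
      by_cases hj : j = 0 <;> simp [hd, hj, ha0]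
    set P : Matrix (Fin (m+1)) (Fin (m+1)) ℝ := Q1 * D * Q2⁻¹ with hP
    have hPdet : IsUnit P.det := by
      rw [hP, det_mul, det_mul]
      exact (hQ1.mul hDdet).mul (isUnit_nonsing_inv_det Q2 hQ2)
    have hPT : IsUnit Pᵀ.det := by rwa [det_transpose]
    have hQ2T : IsUnit Q2ᵀ.det := by rwa [det_transpose]
    -- P *ᵥ ones = a • v
    have hDe : D *ᵥ (Pi.single 0 1 : Fin (m+1) → ℝ) = a • (Pi.single 0 1 : Fin (m+1) → ℝ) := by
      rw [hD, diagonal_mulVec_single]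
      ext i
      rcases eq_or_ne i 0 with rfl | h
      · simp [hd]
      · simp [h, Pi.single_apply]
    have hPones : P *ᵥ ones = a • v := by
      rw [hP, ← mulVec_mulVec, ← mulVec_mulVec]
      have h2 : Q2⁻¹ *ᵥ ones = (Pi.single 0 1 : Fin (m+1) → ℝ) := by
        rw [← hQ2e]; exact invVec Q2 hQ2 _
      rw [h2, hDe, mulVec_smul, hQ1e]
    -- Pᵀ *ᵥ w = ones
    have hPTw : Pᵀ *ᵥ w = ones := by
      have ht : Pᵀ = Q2⁻¹ᵀ * (Dᵀ * Q1ᵀ) := by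
        rw [hP, transpose_mul, transpose_mul]
      rw [ht, ← mulVec_mulVec, ← mulVec_mulVec, hQ1w]
      rw [hD, diagonal_transpose, mulVec_smul, diagonal_mulVec_single]
      have hsingle : c • (Pi.single 0 (d 0 * 1) : Fin (m+1) → ℝ)
          = (m+1 : ℝ) • (Pi.single 0 1 : Fin (m+1) → ℝ) := by
        ext i
        rcases eq_or_ne i 0 with rfl | h
        · simp [hd]
          rw [ha]; field_simp
        · simp [h, Pi.single_apply]
      rw [hsingle, transpose_nonsing_inv]
      rw [← hdot11, ← hQ2w]
      exact invVec Q2ᵀ hQ2T ones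
    refine ⟨P, hPdet, ?_, ?_⟩
    · rw [hrow_iff]
      rw [← mulVec_mulVec, ← mulVec_mulVec, hPones, mulVec_smul, hv, ← hPones]
      exact invVec P hPdet ones
    · rw [hcol_iff]
      have ht : (P⁻¹ * A * P)ᵀ = Pᵀ * (Aᵀ * P⁻¹ᵀ) := by
        rw [transpose_mul (P⁻¹ * A) P, transpose_mul P⁻¹ A]
      rw [ht, ← mulVec_mulVec, ← mulVec_mulVec, transpose_nonsing_inv]
      have h4 : Pᵀ⁻¹ *ᵥ ones = w := by
        rw [← hPTw]; exact invVec Pᵀ hPT w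
      rw [h4, hw, hPTw]
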